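/- If x' ≤ x in Bruhat order, then x' ◁ y ≤ x ◁ y, where x ◁ y denotes the unique minimal element of {xv : v ≤ y}. -/

import Mathlib

/-- The Bruhat order on a Coxeter group, defined via the subword property:
`u ≤ v` iff some reduced word for `v` contains a subword whose product is `u`. -/
def bruhatLE {B W : Type*} [Group W] {M : CoxeterMatrix B} (cs : CoxeterSystem M W)
    (u v : W) : Prop :=
  ∃ l : List B, cs.IsReduced l ∧ cs.wordProd l = v ∧
    ∃ l' : List B, l'.Sublist l ∧ cs.wordProd l' = u

open CoxeterSystem List

namespace DemazureAux

variable {B W : Type*} [Group W] {M : CoxeterMatrix B} (cs : CoxeterSystem M W)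

local prefix:100 "s" => cs.simple
local prefix:100 "ℓ" => cs.length
local prefix:100 "π" => cs.wordProd

/-- The group `W → Multiplicative (ZMod 2)` on which `W` acts. -/
abbrev NN (W : Type*) := W → Multiplicative (ZMod 2)

open scoped Classical in
/-- indicator function at `t` -/
noncomputable def chi (t : W) : NN W :=
  fun u => if u = t then Multiplicative.ofAdd 1 else 1

omit [Group W] in
theorem chi_mul_self (t : W) : chi t * chi t = 1 := by
  funext u
  simp only [chi, Pi.mul_apply, Pi.one_apply]
  split <;> decide

omit [Group W] in
theorem chi_apply_self (t : W) : chi t t = Multiplicative.ofAdd 1 := by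
  simp [chi]

omit [Group W] in
theorem chi_apply_of_ne {t u : W} (h : u ≠ t) : chi t u = 1 := by
  simp [chi, h]

/-- conjugation action of `W` on `NN W` -/
def conjAct (w : W) : NN W ≃* NN W where
  toFun f := fun u => f (w⁻¹ * u * w)
  invFun f := fun u => f (w * u * w⁻¹)
  left_inv f := by funext u; group
  right_inv f := by funext u; group
  map_mul' f g := rfl

/-- conjugation action as a homomorphism to `MulAut` -/
def phi (W : Type*) [Group W] : W →* MulAut (NN W) where
  toFun := conjAct
  map_one' := by ext f u; simp [conjAct]
  map_mul' a b := by ext f u; simp [conjAct, mul_assoc]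

theorem phi_apply (w : W) (f : NN W) (u : W) : phi W w f u = f (w⁻¹ * u * w) := rfl

theorem phi_chi (w t : W) : phi W w (chi t) = chi (w * t * w⁻¹) := by
  funext u
  classical
  rw [phi_apply]
  unfold chi
  refine if_congr ?_ rfl rfl
  constructor
  · intro h; rw [(by group : u = w * (w⁻¹ * u * w) * w⁻¹), h]
  · intro h; rw [h]; group

/-- The target semidirect product group. -/
abbrev GG (W : Type*) [Group W] := SemidirectProduct (NN W) W (phi W)

theorem pow_mk (n : NN W) (g : W) (m : ℕ) :
    (⟨n, g⟩ : GG W) ^ m = ⟨∏ k ∈ Finset.range m, phi W (g ^ k) n, g ^ m⟩ := by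
  induction m with
  | zero => simp
  | succ m ih =>
    rw [pow_succ, ih, SemidirectProduct.mul_def]
    congr 1
    · rw [Finset.prod_range_succ]
    · rw [pow_succ]

theorem prod_range_two_mul (m : ℕ) {α : Type*} [CommMonoid α] (h : ℕ → α) :
    ∏ p ∈ Finset.range (2 * m), h p
      = ∏ k ∈ Finset.range m, (h (2 * k) * h (2 * k + 1)) := by
  induction m with
  | zero => simp
  | succ m ih =>
    rw [Nat.mul_succ, Finset.prod_range_succ, Finset.prod_range_succ,
      Finset.prod_range_succ, ← ih, mul_assoc]

theorem liftable : M.IsLiftable (fun i => (⟨chi (cs.simple i), cs.simple i⟩ : GG W)) := by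
  intro i j
  set a : NN W := chi (s i) * phi W (s i) (chi (s j)) with ha
  have hmul : (⟨chi (s i), s i⟩ : GG W) * ⟨chi (s j), s j⟩ = ⟨a, s i * s j⟩ := rfl
  rw [hmul, pow_mk]
  have hW : (s i * s j) ^ M i j = 1 := cs.simple_mul_simple_pow i j
  rw [hW]
  have hinv : ∀ k : ℕ, ((s i * s j) ^ k)⁻¹ = (s j * s i) ^ k := by
    intro k
    rw [← inv_pow, mul_inv_rev, cs.inv_simple, cs.inv_simple]
  have h1 : ∀ k : ℕ, (s i * s j) ^ k * s i = s i * (s j * s i) ^ k := by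
    intro k
    have hsc : SemiconjBy (s i) (s j * s i) (s i * s j) := by
      unfold SemiconjBy; group
    exact (hsc.pow_right k).symm
  have key : ∀ k : ℕ, phi W ((s i * s j) ^ k) a
      = chi (s i * (s j * s i) ^ (2 * k)) * chi (s i * (s j * s i) ^ (2 * k + 1)) := by
    intro k
    rw [ha, map_mul, phi_chi, phi_chi, phi_chi, cs.inv_simple, hinv]
    congr 1
    · congr 1
      rw [h1, mul_assoc, ← pow_add, two_mul]
    · congr 1
      rw [show s i * s j * s i = s i * (s j * s i) by rw [mul_assoc],
        ← mul_assoc, h1 k, mul_assoc, mul_assoc, ← pow_succ', ← pow_add,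
        show k + (k + 1) = 2 * k + 1 from by omega]
  have hN : ∏ k ∈ Finset.range (M i j), phi W ((s i * s j) ^ k) a = 1 := by
    calc ∏ k ∈ Finset.range (M i j), phi W ((s i * s j) ^ k) a
        = ∏ k ∈ Finset.range (M i j),
            (chi (s i * (s j * s i) ^ (2 * k)) * chi (s i * (s j * s i) ^ (2 * k + 1))) :=
          Finset.prod_congr rfl (fun k _ => key k)
      _ = ∏ p ∈ Finset.range (2 * M i j), chi (s i * (s j * s i) ^ p) :=
          (prod_range_two_mul (M i j) (fun p => chi (s i * (s j * s i) ^ p))).symm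
      _ = 1 := by
          rw [two_mul, Finset.prod_range_add, ← Finset.prod_mul_distrib]
          apply Finset.prod_eq_one
          intro p _
          have : s i * (s j * s i) ^ (M i j + p) = s i * (s j * s i) ^ p := by
            rw [pow_add, cs.simple_mul_simple_pow' i j, one_mul]
          rw [this, chi_mul_self]
  rw [hN]
  rfl

end DemazureAux

namespace DemazureAux

open scoped Classical

variable {B W : Type*} [Group W] {M : CoxeterMatrix B} (cs : CoxeterSystem M W)

local prefix:100 "s" => cs.simple
local prefix:100 "ℓ" => cs.length
local prefix:100 "π" => cs.wordProd

/-- The parity homomorphism. -/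
noncomputable def theta : W →* GG W :=
  cs.lift ⟨fun i => (⟨chi (cs.simple i), cs.simple i⟩ : GG W), liftable cs⟩

theorem theta_simple (i : B) : theta cs (s i) = ⟨chi (s i), s i⟩ :=
  cs.lift_apply_simple (liftable cs) i

/-- The parity cocycle: `eta cs w x` is the parity of the number of times `x` occurs in
the left inversion sequence of any word for `w`. -/
noncomputable def eta (w x : W) : ZMod 2 :=
  Multiplicative.toAdd ((theta cs w).left x)

theorem eta_simple (i : B) (x : W) :
    eta cs (s i) x = if x = s i then 1 else 0 := by
  unfold eta
  rw [theta_simple]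
  show Multiplicative.toAdd (chi (s i) x) = _
  unfold chi
  split <;> simp_all

theorem eta_mul (a b x : W) : eta cs (a * b) x = eta cs a x + eta cs b (a⁻¹ * x * a) := by
  unfold eta
  rw [map_mul, SemidirectProduct.mul_left, Pi.mul_apply, toAdd_mul]
  congr 2
  have hr : (theta cs a).right = a := by
    have : (SemidirectProduct.rightHom.comp (theta cs)) = MonoidHom.id W := by
      apply cs.ext_simple
      intro i
      simp [theta_simple]
    calc (theta cs a).right = (SemidirectProduct.rightHom.comp (theta cs)) a := rfl
      _ = a := by rw [this]; rfl
  rw [phi_apply, hr]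

theorem eta_one (x : W) : eta cs 1 x = 0 := by
  unfold eta
  rw [map_one]
  rfl

/-- membership in the left inversion sequence from odd parity -/
theorem mem_leftInvSeq_of_eta_ne_zero (ω : List B) (x : W)
    (h : eta cs (π ω) x ≠ 0) : x ∈ cs.leftInvSeq ω := by
  induction ω generalizing x with
  | nil => simp [cs.wordProd_nil, eta_one] at h
  | cons i ω ih =>
    rw [cs.wordProd_cons, eta_mul, eta_simple] at h
    rw [leftInvSeq]
    by_cases hx : x = s i
    · exact hx ▸ List.mem_cons_self
    · rw [if_neg hx, zero_add] at h
      have hmem := ih _ h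
      refine List.mem_cons_of_mem _ ?_
      refine List.mem_map.mpr ⟨(s i)⁻¹ * x * s i, hmem, ?_⟩
      simp only [MulAut.conj_apply]
      group

/-- right-handed parity -/
noncomputable def etaR (w x : W) : ZMod 2 := eta cs w⁻¹ x

theorem etaR_mul (a b x : W) : etaR cs (a * b) x = etaR cs b x + etaR cs a (b * x * b⁻¹) := by
  unfold etaR
  rw [mul_inv_rev, eta_mul]
  congr 2
  group

theorem etaR_simple (i : B) (x : W) :
    etaR cs (s i) x = if x = s i then 1 else 0 := by
  unfold etaR
  rw [cs.inv_simple, eta_simple]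

theorem mem_rightInvSeq_of_etaR_ne_zero (ω : List B) (x : W)
    (h : etaR cs (π ω) x ≠ 0) : x ∈ cs.rightInvSeq ω := by
  unfold etaR at h
  rw [← cs.wordProd_reverse] at h
  have hmem := mem_leftInvSeq_of_eta_ne_zero cs ω.reverse x h
  have hrev : cs.leftInvSeq ω.reverse = (cs.rightInvSeq ω).reverse := by
    have h2 := cs.rightInvSeq_reverse ω.reverse
    rw [List.reverse_reverse] at h2
    rw [h2, List.reverse_reverse]
  rw [hrev] at hmem
  exact List.mem_reverse.mp hmem

/-- Key palindrome parity: `etaR t t = 1` for any reflection `t`. -/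
theorem etaR_self_eq_one {t : W} (ht : cs.IsReflection t) : etaR cs t t = 1 := by
  obtain ⟨w, i, rfl⟩ := ht
  obtain ⟨γ, rfl⟩ := cs.wordProd_surjective w
  induction γ generalizing i with
  | nil =>
    simp only [cs.wordProd_nil, one_mul, inv_one, mul_one]
    rw [etaR_simple, if_pos rfl]
  | cons j γ ih =>
    rw [cs.wordProd_cons]
    set c := π γ with hc
    set t' := c * s i * c⁻¹ with ht'
    have hre : s j * c * s i * (s j * c)⁻¹ = s j * (t' * s j) := by
      rw [ht', mul_inv_rev, cs.inv_simple]
      group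
    rw [hre, etaR_mul cs (s j) (t' * s j)]
    have harg1 : t' * s j * (s j * (t' * s j)) * (t' * s j)⁻¹ = t' := by
      rw [mul_inv_rev, cs.inv_simple]
      simp only [mul_assoc, cs.simple_mul_simple_cancel_left]
      simp
    rw [harg1, etaR_mul cs t' (s j)]
    have harg2 : s j * (s j * (t' * s j)) * (s j)⁻¹ = t' := by
      rw [cs.inv_simple]
      simp [cs.simple_mul_simple_self]
    rw [harg2, ih i, etaR_simple, etaR_simple]
    have hiff : (s j * (t' * s j) = s j) ↔ (t' = s j) := by
      constructor
      · intro h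
        have h' : t' * s j = 1 := mul_left_cancel (a := s j) (by rw [h, mul_one])
        rw [mul_eq_one_iff_eq_inv, cs.inv_simple] at h'
        exact h'
      · intro h
        rw [h]
        exact cs.simple_mul_simple_cancel_left j
    by_cases hcase : t' = s j
    · rw [if_pos hcase, if_pos (hiff.mpr hcase)]
      decide
    · rw [if_neg hcase, if_neg (fun hcon => hcase (hiff.mp hcon))]
      decide

end DemazureAux

namespace DemazureAux

open scoped Classical

variable {B W : Type*} [Group W] {M : CoxeterMatrix B} (cs : CoxeterSystem M W)

local prefix:100 "s" => cs.simple
local prefix:100 "ℓ" => cs.length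
local prefix:100 "π" => cs.wordProd

/-- Strong exchange property (membership form). -/
theorem strong_exchange_mem {t : W} (ht : cs.IsReflection t) (ω : List B)
    (hω : cs.IsReduced ω) (hlt : ℓ (π ω * t) < ℓ (π ω)) : t ∈ cs.rightInvSeq ω := by
  set w := π ω with hw
  have htt : t * t = 1 := ht.mul_self
  have hsplit : etaR cs w t = etaR cs t t + etaR cs (w * t) (t * t * t⁻¹) := by
    have : w = (w * t) * t := by rw [mul_assoc, htt, mul_one]
    nth_rewrite 1 [this]
    rw [etaR_mul]
  have harg : t * t * t⁻¹ = t := by rw [htt, one_mul, ht.inv]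
  rw [harg, etaR_self_eq_one cs ht] at hsplit
  have hz : etaR cs (w * t) t = 0 := by
    by_contra hne
    obtain ⟨τ, hτred, hτ⟩ := cs.exists_reduced_word' (w * t)
    rw [hτ] at hne
    have hmem := mem_rightInvSeq_of_etaR_ne_zero cs τ t hne
    have hinv := cs.isRightInversion_of_mem_rightInvSeq hτred hmem
    rw [← hτ] at hinv
    have : ℓ (w * t * t) < ℓ (w * t) := hinv.2
    rw [mul_assoc, htt, mul_one] at this
    omega
  rw [hz, add_zero] at hsplit
  apply mem_rightInvSeq_of_etaR_ne_zero cs ω t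
  rw [← hw, hsplit]
  decide

/-- Strong exchange property (index form). -/
theorem strong_exchange {t : W} (ht : cs.IsReflection t) (ω : List B)
    (hω : cs.IsReduced ω) (hlt : ℓ (π ω * t) < ℓ (π ω)) :
    ∃ j < ω.length, π (ω.eraseIdx j) = π ω * t := by
  have hmem := strong_exchange_mem cs ht ω hω hlt
  obtain ⟨j, hj, hget⟩ := List.mem_iff_getElem.mp hmem
  rw [cs.length_rightInvSeq] at hj
  refine ⟨j, hj, ?_⟩
  rw [← cs.wordProd_mul_getD_rightInvSeq]
  congr 1
  rw [List.getD_eq_getElem _ _ (by rw [cs.length_rightInvSeq]; exact hj), hget]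

/-- Deletion property: every word has a reduced sublist with the same product. -/
theorem exists_reduced_sublist_aux (n : ℕ) : ∀ ω : List B, ω.length ≤ n →
    ∃ δ : List B, δ.Sublist ω ∧ cs.IsReduced δ ∧ π δ = π ω := by
  induction n with
  | zero =>
    intro ω hlen
    rw [Nat.le_zero, List.length_eq_zero_iff] at hlen
    exact ⟨ω, List.Sublist.refl ω, by simp [hlen, CoxeterSystem.IsReduced], rfl⟩
  | succ n ih =>
    intro ω hlen
    by_cases hred : cs.IsReduced ω
    · exact ⟨ω, List.Sublist.refl ω, hred, rfl⟩
    -- find minimal non-reduced prefix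
    have hex : ∃ m, ¬ cs.IsReduced (ω.take (m + 1)) := by
      rcases Nat.eq_zero_or_pos ω.length with h0 | hpos
      · exact absurd (by simp [List.eq_nil_of_length_eq_zero h0, CoxeterSystem.IsReduced]) hred
      · exact ⟨ω.length - 1, by rwa [Nat.sub_add_cancel hpos, List.take_length]⟩
    set k := Nat.find hex with hk
    have hknred : ¬ cs.IsReduced (ω.take (k + 1)) := Nat.find_spec hex
    have hkred : cs.IsReduced (ω.take k) := by
      rcases Nat.eq_zero_or_pos k with h0 | hpos
      · simp [h0, CoxeterSystem.IsReduced]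
      · have := Nat.find_min hex (m := k - 1) (by omega)
        rw [not_not] at this
        rwa [Nat.sub_add_cancel hpos] at this
    have hklt : k < ω.length := by
      by_contra hge
      push_neg at hge
      rw [List.take_of_length_le (by omega)] at hknred
      exact hknred (by rwa [List.take_of_length_le hge] at hkred)
    have htake : ω.take (k + 1) = ω.take k ++ [ω[k]] := by
      rw [List.take_succ]
      simp [List.getElem?_eq_getElem hklt]
    have hlenk : ℓ (π (ω.take k)) = k := by
      have h2 := hkred
      unfold CoxeterSystem.IsReduced at h2
      rw [h2, List.length_take]
      omega
    have hdrop : ℓ (π (ω.take k) * s (ω[k])) < ℓ (π (ω.take k)) := by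
      rcases cs.length_mul_simple (π (ω.take k)) (ω[k]) with h | h
      · exfalso
        apply hknred
        unfold CoxeterSystem.IsReduced
        rw [htake, cs.wordProd_append, cs.wordProd_singleton, h, hlenk]
        simp [List.length_take]
        omega
      · omega
    obtain ⟨j, hjlt, hjer⟩ := strong_exchange cs (cs.isReflection_simple (ω[k]))
      (ω.take k) hkred hdrop
    set ω' := (ω.take k).eraseIdx j ++ ω.drop (k + 1) with hω'
    have hsub : ω'.Sublist ω := by
      have h1 : ((ω.take k).eraseIdx j).Sublist (ω.take (k + 1)) := by
        rw [htake]
        exact ((ω.take k).eraseIdx_sublist j).trans (List.sublist_append_left _ _)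
      have h2 : ω'.Sublist (ω.take (k + 1) ++ ω.drop (k + 1)) :=
        List.Sublist.append h1 (List.Sublist.refl _)
      rwa [List.take_append_drop] at h2
    have hprod : π ω' = π ω := by
      have e1 : π ω = π (ω.take (k + 1)) * π (ω.drop (k + 1)) := by
        conv_lhs => rw [← List.take_append_drop (k + 1) ω]
        rw [cs.wordProd_append]
      have e2 : π (ω.take (k + 1)) = π (ω.take k) * s (ω[k]) := by
        rw [htake, cs.wordProd_append, cs.wordProd_singleton]
      rw [hω', cs.wordProd_append, hjer, e1, e2]
    have hlen' : ω'.length ≤ n := by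
      have e := List.length_eraseIdx_add_one hjlt
      have ht : (ω.take k).length = k := by rw [List.length_take]; omega
      rw [hω', List.length_append, List.length_drop]
      omega
    obtain ⟨δ, hδsub, hδred, hδprod⟩ := ih ω' hlen'
    exact ⟨δ, hδsub.trans hsub, hδred, by rw [hδprod, hprod]⟩

theorem exists_reduced_sublist (ω : List B) :
    ∃ δ : List B, δ.Sublist ω ∧ cs.IsReduced δ ∧ π δ = π ω :=
  exists_reduced_sublist_aux cs ω.length ω le_rfl

end DemazureAux

namespace DemazureAux

open scoped Classical

variable {B W : Type*} [Group W] {M : CoxeterMatrix B} (cs : CoxeterSystem M W)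

local prefix:100 "s" => cs.simple
local prefix:100 "ℓ" => cs.length
local prefix:100 "π" => cs.wordProd

/-- single Bruhat step: multiply by a reflection on the right, length goes up -/
def clStep (u v : W) : Prop := ∃ t, cs.IsReflection t ∧ v = u * t ∧ ℓ u < ℓ v

/-- chain (Bruhat) order -/
def cle (u v : W) : Prop := Relation.ReflTransGen (clStep cs) u v

theorem cle_refl (u : W) : cle cs u u := Relation.ReflTransGen.refl

theorem cle_trans {u v w : W} (h1 : cle cs u v) (h2 : cle cs v w) : cle cs u w :=
  Relation.ReflTransGen.trans h1 h2

theorem cle_length_le {u v : W} (h : cle cs u v) : ℓ u ≤ ℓ v := by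
  induction h with
  | refl => exact le_rfl
  | tail _ hstep ih =>
    obtain ⟨t, _, rfl, hlt⟩ := hstep
    omega

theorem cle_of_step {u v : W} (t : W) (ht : cs.IsReflection t) (hv : v = u * t)
    (hlt : ℓ u < ℓ v) : cle cs u v :=
  Relation.ReflTransGen.single ⟨t, ht, hv, hlt⟩

/-- going up by a simple reflection on the right -/
theorem cle_mul_simple_right {b : W} (i : B) (h : ℓ b < ℓ (b * s i)) :
    cle cs b (b * s i) :=
  cle_of_step cs (s i) (cs.isReflection_simple i) rfl h

/-- going up by multiplying by a simple reflection on the left -/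
theorem cle_simple_mul_left' {b : W} (i : B) (h : ℓ b < ℓ (s i * b)) :
    cle cs b (s i * b) := by
  refine cle_of_step cs (b⁻¹ * s i * b) ?_ ?_ h
  · have := (cs.isReflection_simple i).conj b⁻¹
    rwa [inv_inv] at this
  · group

/-- going down by removing a simple reflection on the left (when it is a descent) -/
theorem cle_simple_mul_left {b : W} (i : B) (h : ℓ (s i * b) < ℓ b) :
    cle cs (s i * b) b := by
  refine cle_of_step cs (b⁻¹ * s i * b) ?_ ?_ h
  · have := (cs.isReflection_simple i).conj b⁻¹
    rwa [inv_inv] at this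
  · rw [mul_assoc, mul_assoc, mul_inv_cancel_left, cs.simple_mul_simple_cancel_left]

/-- every reduced word of the top element contains a reduced word of the bottom element -/
theorem cle_subword {a b : W} (h : cle cs a b) :
    ∀ β : List B, cs.IsReduced β → π β = b →
      ∃ α : List B, α.Sublist β ∧ cs.IsReduced α ∧ π α = a := by
  induction h with
  | refl => exact fun β hred hprod => ⟨β, List.Sublist.refl β, hred, hprod⟩
  | @tail bmid cend hab hstep ih =>
    intro β hred hprod
    obtain ⟨t, htrefl, rfl, hlt⟩ := hstep
    have hbt : π β * t = bmid := by rw [hprod, mul_assoc, htrefl.mul_self, mul_one]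
    have hlt' : ℓ (π β * t) < ℓ (π β) := by rw [hbt, hprod]; exact hlt
    obtain ⟨j, hjlt, hjer⟩ := strong_exchange cs htrefl β hred hlt'
    rw [hbt] at hjer
    obtain ⟨δ, hδsub, hδred, hδprod⟩ := exists_reduced_sublist cs (β.eraseIdx j)
    rw [hjer] at hδprod
    obtain ⟨α, hαsub, hαred, hαprod⟩ := ih δ hδred hδprod
    exact ⟨α, (hαsub.trans hδsub).trans (β.eraseIdx_sublist j), hαred, hαprod⟩

/-- The main mutual induction: (A) subwords of reduced words are below in chain order;
(B) the chain order lifts along left multiplication by a simple reflection. -/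
theorem chain_main : ∀ n : ℕ,
    (∀ β : List B, cs.IsReduced β → β.length ≤ n →
      ∀ α : List B, α.Sublist β → cle cs (π α) (π β)) ∧
    (∀ (i : B) (u v : W), cle cs u v → ℓ (s i * v) = ℓ v + 1 → ℓ (s i * v) ≤ n →
      cle cs (s i * u) (s i * v) ∧ cle cs u (s i * v)) := by
  intro n
  induction n using Nat.strong_induction_on with
  | _ n IH =>
  have hB : ∀ (i : B) (u v : W), cle cs u v → ℓ (s i * v) = ℓ v + 1 → ℓ (s i * v) ≤ n →
      cle cs (s i * u) (s i * v) ∧ cle cs u (s i * v) := by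
    intro i u v hc hlv hbound
    induction hc using Relation.ReflTransGen.head_induction_on with
    | refl =>
      exact ⟨cle_refl cs _, cle_simple_mul_left' cs i (by omega)⟩
    | @head u umid hstep hrest ihP =>
      obtain ⟨t, htrefl, rfl, hlt⟩ := hstep
      have hmemb : cle cs u (s i * v) :=
        Relation.ReflTransGen.head ⟨t, htrefl, rfl, hlt⟩ ihP.2
      refine ⟨?_, hmemb⟩
      rcases cs.length_simple_mul u i with hup | hdown
      · -- ℓ (s i * u) = ℓ u + 1
        rcases cs.length_simple_mul (u * t) i with hup2 | hdown2
        · -- both go up : single step from s i * u to s i * (u * t)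
          refine cle_trans cs ?_ ihP.1
          exact cle_of_step cs t htrefl (by rw [mul_assoc]) (by omega)
        · -- hard case : ℓ (s i * (u * t)) < ℓ (u * t)
          have hdes : ℓ (s i * (u * t)) < ℓ (u * t) := by omega
          obtain ⟨κ, hκred, hκprod⟩ := cs.exists_reduced_word' (s i * (u * t))
          have hκlen : κ.length = ℓ (s i * (u * t)) := by
            have := hκred
            unfold CoxeterSystem.IsReduced at this
            rw [← hκprod] at this
            omega
          have hβprod : π (i :: κ) = u * t := by
            rw [cs.wordProd_cons, ← hκprod, cs.simple_mul_simple_cancel_left]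
          have hβred : cs.IsReduced (i :: κ) := by
            unfold CoxeterSystem.IsReduced
            rw [hβprod, List.length_cons]
            omega
          have hSE : ℓ (π (i :: κ) * t) < ℓ (π (i :: κ)) := by
            rw [hβprod, mul_assoc, htrefl.mul_self, mul_one]
            exact hlt
          obtain ⟨j, hjlt, hjer⟩ := strong_exchange cs htrefl (i :: κ) hβred hSE
          rw [hβprod, mul_assoc, htrefl.mul_self, mul_one] at hjer
          match j, hjlt with
          | 0, _ =>
            -- u = π κ = s i * (u * t), so s i * u = u * t
            have hu : u = s i * (u * t) := by
              rw [hκprod]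
              exact hjer.symm
            have heq : s i * u = u * t := by
              nth_rewrite 1 [hu]
              rw [cs.simple_mul_simple_cancel_left]
            rw [heq]
            exact ihP.2
          | (j' + 1), hjlt =>
            have herase : (i :: κ).eraseIdx (j' + 1) = i :: κ.eraseIdx j' := rfl
            rw [herase, cs.wordProd_cons] at hjer
            have hsiu : s i * u = π (κ.eraseIdx j') := by
              rw [← hjer, cs.simple_mul_simple_cancel_left]
            have hbound2 : κ.length < n := by
              have h1 : ℓ (u * t) ≤ ℓ v := cle_length_le cs hrest
              omega
            have hA' := (IH κ.length hbound2).1 κ hκred le_rfl (κ.eraseIdx j')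
              (κ.eraseIdx_sublist j')
            rw [← hsiu, ← hκprod] at hA'
            -- now : cle (s i * u) (s i * (u * t)) and s i * (u * t) ⟶ u * t ⟶ ... ⟶ s i * v
            refine cle_trans cs hA' (cle_trans cs ?_ ihP.2)
            exact cle_simple_mul_left cs i hdes
      · -- ℓ (s i * u) < ℓ u : go down then up
        refine cle_trans cs (cle_simple_mul_left cs i (by omega)) ?_
        exact Relation.ReflTransGen.head ⟨t, htrefl, rfl, hlt⟩ ihP.2
  have hA : ∀ β : List B, cs.IsReduced β → β.length ≤ n →
      ∀ α : List B, α.Sublist β → cle cs (π α) (π β) := by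
    intro β hred hlen α hsub
    match β, hred, hlen, hsub with
    | [], _, _, hsub =>
      rw [List.sublist_nil.mp hsub]
      exact cle_refl cs _
    | (i :: κ), hred, hlen, hsub =>
      have hκred : cs.IsReduced κ := by
        have := CoxeterSystem.IsReduced.drop hred 1
        simpa using this
      have hκlen : ℓ (π κ) = κ.length := hκred
      have hlenβ : ℓ (π (i :: κ)) = κ.length + 1 := by
        have := hred
        unfold CoxeterSystem.IsReduced at this
        rw [this, List.length_cons]
      have hup : ℓ (s i * π κ) = ℓ (π κ) + 1 := by
        rw [← cs.wordProd_cons, hlenβ, hκlen]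
      have hbnd : ℓ (s i * π κ) ≤ n := by
        rw [← cs.wordProd_cons, hlenβ]
        simpa using hlen
      rcases List.sublist_cons_iff.mp hsub with hsubκ | ⟨α₀, rfl, hsubκ⟩
      · have h1 : cle cs (π α) (π κ) := by
          rcases Nat.eq_zero_or_pos n with h0 | hpos
          · exfalso; simp [h0] at hlen
          · exact (IH (n - 1) (by omega)).1 κ hκred (by simp at hlen; omega) α hsubκ
        rw [cs.wordProd_cons]
        exact (hB i _ _ h1 hup hbnd).2
      · have h1 : cle cs (π α₀) (π κ) := by
          rcases Nat.eq_zero_or_pos n with h0 | hpos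
          · exfalso; simp [h0] at hlen
          · exact (IH (n - 1) (by omega)).1 κ hκred (by simp at hlen; omega) α₀ hsubκ
        rw [cs.wordProd_cons, cs.wordProd_cons]
        exact (hB i _ _ h1 hup hbnd).1
  exact ⟨hA, hB⟩

end DemazureAux

namespace DemazureAux

open scoped Classical

variable {B W : Type*} [Group W] {M : CoxeterMatrix B} (cs : CoxeterSystem M W)

local prefix:100 "s" => cs.simple
local prefix:100 "ℓ" => cs.length
local prefix:100 "π" => cs.wordProd

theorem bruhatLE_iff_cle {a b : W} : bruhatLE cs a b ↔ cle cs a b := by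
  constructor
  · rintro ⟨l, hred, hprod, l', hsub, hprod'⟩
    have := (chain_main cs l.length).1 l hred le_rfl l' hsub
    rwa [hprod, hprod'] at this
  · intro h
    obtain ⟨ω, hωred, hωprod⟩ := cs.exists_reduced_word' b
    obtain ⟨α, hαsub, hαred, hαprod⟩ := cle_subword cs h ω hωred hωprod.symm
    exact ⟨ω, hωred, hωprod.symm, α, hαsub, hαprod⟩

theorem bruhatLE_trans {a b c : W} (h1 : bruhatLE cs a b) (h2 : bruhatLE cs b c) :
    bruhatLE cs a c := by
  rw [bruhatLE_iff_cle] at *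
  exact cle_trans cs h1 h2

/-- sublists of a concat -/
theorem sublist_concat_cases {α : Type*} {l κ : List α} {i : α} (h : l.Sublist (κ ++ [i])) :
    l.Sublist κ ∨ ∃ l₀, l = l₀ ++ [i] ∧ l₀.Sublist κ := by
  have hrev : l.reverse.Sublist (i :: κ.reverse) := by
    have := List.reverse_sublist.mpr h
    rwa [List.reverse_append, List.reverse_singleton] at this
  rcases List.sublist_cons_iff.mp hrev with h1 | ⟨r, hr, hrsub⟩
  · left
    rw [← List.reverse_sublist]
    simpa using h1
  · right
    refine ⟨r.reverse, ?_, ?_⟩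
    · rw [← List.reverse_reverse l, hr]
      simp
    · rw [← List.reverse_sublist]
      simpa using hrsub

/-- the key one-step lifting lemma for the Demazure argument -/
theorem bruhat_mul_simple_cases {a b : W} (h : bruhatLE cs a b) (i : B) :
    bruhatLE cs a (b * s i) ∨ bruhatLE cs (a * s i) (b * s i) := by
  rcases cs.length_mul_simple b i with hupl | hdownl
  · -- length goes up
    left
    rw [bruhatLE_iff_cle] at h ⊢
    exact cle_trans cs h (cle_mul_simple_right cs i (by omega))
  · -- length goes down : b has a reduced word ending in i
    obtain ⟨κ, hκred, hκprod⟩ := cs.exists_reduced_word' (b * s i)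
    have hκlen : κ.length = ℓ (b * s i) := by
      have := hκred
      unfold CoxeterSystem.IsReduced at this
      rw [← hκprod] at this
      omega
    have hβprod : π (κ ++ [i]) = b := by
      rw [cs.wordProd_append, cs.wordProd_singleton, ← hκprod,
        cs.simple_mul_simple_cancel_right]
    have hβred : cs.IsReduced (κ ++ [i]) := by
      unfold CoxeterSystem.IsReduced
      rw [hβprod, List.length_append, List.length_singleton]
      omega
    rw [bruhatLE_iff_cle] at h
    obtain ⟨α, hαsub, hαred, hαprod⟩ := cle_subword cs h (κ ++ [i]) hβred hβprod
    rcases sublist_concat_cases hαsub with hsubκ | ⟨α₀, rfl, hsubκ⟩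
    · left
      exact ⟨κ, hκred, hκprod.symm, α, hsubκ, hαprod⟩
    · right
      refine ⟨κ, hκred, hκprod.symm, α₀, hsubκ, ?_⟩
      rw [cs.wordProd_append, cs.wordProd_singleton] at hαprod
      rw [← hαprod, cs.simple_mul_simple_cancel_right]

end DemazureAux

/-- Monotonicity of the downwards Demazure product `◁` in the first argument:
if `x' ≤ x` then `x' ◁ y ≤ x ◁ y`, where `x ◁ y` is the unique minimal
element of `{xv : v ≤ y}`. -/
theorem downwards_demazure_left_monotone {B W : Type*} [Group W] {M : CoxeterMatrix B}
    (cs : CoxeterSystem M W) (x x' y m m' : W)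
    (hx' : bruhatLE cs x' x)
    (hmem : ∃ v : W, bruhatLE cs v y ∧ m = x * v)
    (hmin : ∀ z : W, (∃ v : W, bruhatLE cs v y ∧ z = x * v) → bruhatLE cs m z)
    (hmem' : ∃ v : W, bruhatLE cs v y ∧ m' = x' * v)
    (hmin' : ∀ z : W, (∃ v : W, bruhatLE cs v y ∧ z = x' * v) → bruhatLE cs m' z) :
    bruhatLE cs m' m := by
  open DemazureAux in
  obtain ⟨v0, hv0, hm⟩ := hmem
  obtain ⟨ω, hωred, hωprod, ω', hω'sub, hω'prod⟩ := hv0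
  have claim : ∀ ω₀ : List B, ∃ σ : List B, σ.Sublist ω₀ ∧
      bruhatLE cs (x' * cs.wordProd σ) (x * cs.wordProd ω₀) := by
    intro ω₀
    induction ω₀ using List.reverseRecOn with
    | nil => exact ⟨[], List.Sublist.refl [], by simpa using hx'⟩
    | append_singleton ω₀ i ih =>
      obtain ⟨σ₀, hsub, hle⟩ := ih
      rcases bruhat_mul_simple_cases cs hle i with hl | hr
      · refine ⟨σ₀, hsub.trans (List.sublist_append_left _ _), ?_⟩
        rwa [cs.wordProd_append, cs.wordProd_singleton, ← mul_assoc]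
      · refine ⟨σ₀ ++ [i], hsub.append (List.Sublist.refl _), ?_⟩
        rwa [cs.wordProd_append, cs.wordProd_singleton, ← mul_assoc,
          cs.wordProd_append, cs.wordProd_singleton, ← mul_assoc]
  obtain ⟨σ, hσsub, hσle⟩ := claim ω'
  have hvy : bruhatLE cs (cs.wordProd σ) y :=
    ⟨ω, hωred, hωprod, σ, hσsub.trans hω'sub, rfl⟩
  have h1 : bruhatLE cs m' (x' * cs.wordProd σ) := hmin' _ ⟨cs.wordProd σ, hvy, rfl⟩
  have h2 : bruhatLE cs (x' * cs.wordProd σ) m := by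
    rw [hm, ← hω'prod]
    exact hσle
  exact DemazureAux.bruhatLE_trans cs h1 h2
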